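/- arXiv:1702.01919 — 3 statements merged into one kernel-verified Lean document; each statement's English description precedes it below -/
import Mathlib

section
/- Let u : ℝ² → ℂ and v : ℝ² → ℝ² with u differentiable, and let N > 0. Define the supercurrent j := ⟨∇u, iu⟩ (where ⟨x,y⟩ = Re(x conj(y)) componentwise in the gradient). Then pointwise |j - N v| ≤ |∇u - iuNv| + |∇u - iuNv| · |1 - |u|²| + N |v| · |1 - |u|²|. -/
open Complex

/-- `⟨x, y⟩ := Re (x * conj y)` for complex numbers. -/
def cip (x y : ℂ) : ℝ := (x * (starRingEnd ℂ) y).re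

lemma cip_abs_le (x y : ℂ) : |cip x y| ≤ ‖x‖ * ‖y‖ := by
  have h := Complex.abs_re_le_norm (x * (starRingEnd ℂ) y)
  simpa [cip, map_mul] using h

lemma cip_sub (x y : ℂ) (t : ℝ) : cip (x - y * t) y = cip x y - t * ‖y‖ ^ 2 := by
  simp only [cip, sub_mul, Complex.sub_re]
  rw [mul_comm y (t:ℂ), mul_assoc, Complex.mul_conj, Complex.normSq_eq_norm_sq,
    ← Complex.ofReal_mul, Complex.ofReal_re]

lemma tri2 (x y z w : ℝ) :
    Real.sqrt ((x + y) ^ 2 + (z + w) ^ 2) ≤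
      Real.sqrt (x ^ 2 + z ^ 2) + Real.sqrt (y ^ 2 + w ^ 2) := by
  have h := norm_add_le ((x:ℂ) + z * Complex.I) ((y:ℂ) + w * Complex.I)
  rw [show ((x:ℂ) + z * Complex.I) + ((y:ℂ) + w * Complex.I)
      = ((x + y : ℝ) : ℂ) + ((z + w : ℝ) : ℂ) * Complex.I by push_cast; ring,
    Complex.norm_add_mul_I, Complex.norm_add_mul_I, Complex.norm_add_mul_I] at h
  exact h

lemma norm_bd (r : ℝ) (hr : 0 ≤ r) : r ≤ 1 + |1 - r ^ 2| := by
  rcases abs_cases (1 - r ^ 2) with ⟨e, _⟩ | ⟨e, _⟩ <;> rw [e] <;> nlinarith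

/-- Pointwise estimate on the supercurrent `j = ⟨∇u, iu⟩`:
`|j - N v| ≤ |∇u - iuNv| + |∇u - iuNv| |1-|u|²| + N |v| |1-|u|²|`. -/
theorem stmt0 (u : ℝ × ℝ → ℂ) (v₁ v₂ : ℝ × ℝ → ℝ) (N : ℝ) (hN : 0 < N)
    (hu : Differentiable ℝ u) (p : ℝ × ℝ) :
    let d₁ := fderiv ℝ u p (1, 0)
    let d₂ := fderiv ℝ u p (0, 1)
    let j₁ := cip d₁ (Complex.I * u p)
    let j₂ := cip d₂ (Complex.I * u p)
    let modg := Real.sqrt (‖d₁ - Complex.I * u p * (N * v₁ p)‖ ^ 2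
      + ‖d₂ - Complex.I * u p * (N * v₂ p)‖ ^ 2)
    Real.sqrt ((j₁ - N * v₁ p) ^ 2 + (j₂ - N * v₂ p) ^ 2) ≤
      modg + modg * |1 - ‖u p‖ ^ 2|
        + N * Real.sqrt (v₁ p ^ 2 + v₂ p ^ 2) * |1 - ‖u p‖ ^ 2| := by
  intro d₁ d₂ j₁ j₂ modg
  set y : ℂ := Complex.I * u p with hy
  have hyn : ‖y‖ = ‖u p‖ := by simp [hy]
  set s : ℝ := ‖u p‖ ^ 2 with hs
  set w₁ : ℂ := d₁ - Complex.I * u p * (N * v₁ p) with hw₁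
  set w₂ : ℂ := d₂ - Complex.I * u p * (N * v₂ p) with hw₂
  have hw₁' : w₁ = d₁ - y * ((N * v₁ p : ℝ) : ℂ) := by rw [hw₁, hy]; push_cast; ring
  have hw₂' : w₂ = d₂ - y * ((N * v₂ p : ℝ) : ℂ) := by rw [hw₂, hy]; push_cast; ring
  set a₁ : ℝ := cip w₁ y with ha₁
  set a₂ : ℝ := cip w₂ y with ha₂
  have h1 : a₁ = j₁ - (N * v₁ p) * s := by
    rw [ha₁, hw₁', cip_sub, hyn]
  have h2 : a₂ = j₂ - (N * v₂ p) * s := by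
    rw [ha₂, hw₂', cip_sub, hyn]
  have hmodg : modg = Real.sqrt (‖w₁‖ ^ 2 + ‖w₂‖ ^ 2) := rfl
  have hmodg0 : 0 ≤ modg := Real.sqrt_nonneg _
  -- triangle inequality step
  have key : Real.sqrt ((j₁ - N * v₁ p) ^ 2 + (j₂ - N * v₂ p) ^ 2) ≤
      Real.sqrt (a₁ ^ 2 + a₂ ^ 2) +
      Real.sqrt ((N * v₁ p * (s - 1)) ^ 2 + (N * v₂ p * (s - 1)) ^ 2) := by
    have e1 : j₁ - N * v₁ p = a₁ + N * v₁ p * (s - 1) := by rw [h1]; ring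
    have e2 : j₂ - N * v₂ p = a₂ + N * v₂ p * (s - 1) := by rw [h2]; ring
    rw [e1, e2]; exact tri2 _ _ _ _
  -- Cauchy-Schwarz step
  have hA : Real.sqrt (a₁ ^ 2 + a₂ ^ 2) ≤ ‖u p‖ * modg := by
    have c1 := cip_abs_le w₁ y
    have c2 := cip_abs_le w₂ y
    rw [hyn] at c1 c2
    have q1 : a₁ ^ 2 ≤ ‖w₁‖ ^ 2 * ‖u p‖ ^ 2 := by
      nlinarith [abs_nonneg a₁, _root_.sq_abs a₁, norm_nonneg w₁, norm_nonneg (u p)]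
    have q2 : a₂ ^ 2 ≤ ‖w₂‖ ^ 2 * ‖u p‖ ^ 2 := by
      nlinarith [abs_nonneg a₂, _root_.sq_abs a₂, norm_nonneg w₂, norm_nonneg (u p)]
    calc Real.sqrt (a₁ ^ 2 + a₂ ^ 2)
        ≤ Real.sqrt (‖u p‖ ^ 2 * (‖w₁‖ ^ 2 + ‖w₂‖ ^ 2)) :=
          Real.sqrt_le_sqrt (by nlinarith)
      _ = ‖u p‖ * modg := by
          rw [Real.sqrt_mul (sq_nonneg _), Real.sqrt_sq (norm_nonneg _), hmodg]
  -- second term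
  have hB : Real.sqrt ((N * v₁ p * (s - 1)) ^ 2 + (N * v₂ p * (s - 1)) ^ 2)
      = N * Real.sqrt (v₁ p ^ 2 + v₂ p ^ 2) * |1 - s| := by
    rw [show (N * v₁ p * (s - 1)) ^ 2 + (N * v₂ p * (s - 1)) ^ 2
        = (N * (s - 1)) ^ 2 * (v₁ p ^ 2 + v₂ p ^ 2) by ring,
      Real.sqrt_mul (sq_nonneg _), Real.sqrt_sq_eq_abs, abs_mul, abs_of_pos hN,
      abs_sub_comm]
    ring
  -- |u| ≤ 1 + |1 - s|
  have hu1 : ‖u p‖ ≤ 1 + |1 - s| := hs ▸ norm_bd ‖u p‖ (norm_nonneg _)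
  have hA' : ‖u p‖ * modg ≤ modg + modg * |1 - s| :=
    calc ‖u p‖ * modg ≤ (1 + |1 - s|) * modg :=
          mul_le_mul_of_nonneg_right hu1 hmodg0
      _ = modg + modg * |1 - s| := by ring
  linarith [key, hA, hA', hB.le, hB.ge]
end

section
/- Weighted Delort identity: let a : ℝ² → (0,∞) be C¹ and w : ℝ² → ℝ² be C¹. Then pointwise w curl w = a⁻¹ w^⊥ div(aw) - (1/2) a⁻¹ |w|² ∇^⊥ a - a⁻¹ (div(a S_w))^⊥, where S_w := w ⊗ w - (1/2)|w|² Id is the stress-energy tensor and (div T)ₖ := Σₗ ∂ₗ Tₖₗ. -/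
/-- Weighted Delort identity: for a C¹ weight `a > 0` and a C¹ vector field `w` on `ℝ²`,
`w curl w = a⁻¹ w^⊥ div(aw) - (1/2) a⁻¹ |w|² ∇^⊥a - a⁻¹ (div(a S_w))^⊥`
where `S_w = w ⊗ w - (1/2)|w|² Id`, stated componentwise. -/
theorem stmt5 (a w₁ w₂ : ℝ × ℝ → ℝ) (hapos : ∀ q, 0 < a q)
    (ha : ContDiff ℝ 1 a) (h1 : ContDiff ℝ 1 w₁) (h2 : ContDiff ℝ 1 w₂)
    (p : ℝ × ℝ) :
    let pd : (ℝ × ℝ → ℝ) → ℝ × ℝ → ℝ := fun f e => fderiv ℝ f p e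
    let curl := pd w₂ (1, 0) - pd w₁ (0, 1)
    let divaw := pd (fun q => a q * w₁ q) (1, 0) + pd (fun q => a q * w₂ q) (0, 1)
    let S11 : ℝ × ℝ → ℝ := fun q => w₁ q * w₁ q - (1/2) * (w₁ q ^ 2 + w₂ q ^ 2)
    let S12 : ℝ × ℝ → ℝ := fun q => w₁ q * w₂ q
    let S21 : ℝ × ℝ → ℝ := fun q => w₂ q * w₁ q
    let S22 : ℝ × ℝ → ℝ := fun q => w₂ q * w₂ q - (1/2) * (w₁ q ^ 2 + w₂ q ^ 2)
    let d₁ := pd (fun q => a q * S11 q) (1, 0) + pd (fun q => a q * S12 q) (0, 1)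
    let d₂ := pd (fun q => a q * S21 q) (1, 0) + pd (fun q => a q * S22 q) (0, 1)
    let nsq := w₁ p ^ 2 + w₂ p ^ 2
    w₁ p * curl = (a p)⁻¹ * (-(w₂ p)) * divaw
        - (1/2) * (a p)⁻¹ * nsq * (-(pd a (0, 1))) - (a p)⁻¹ * (-(d₂)) ∧
      w₂ p * curl = (a p)⁻¹ * (w₁ p) * divaw
        - (1/2) * (a p)⁻¹ * nsq * (pd a (1, 0)) - (a p)⁻¹ * d₁ := by
  have hda : DifferentiableAt ℝ a p := (ha.differentiable one_ne_zero) p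
  have h1a : DifferentiableAt ℝ w₁ p := (h1.differentiable one_ne_zero) p
  have h2a : DifferentiableAt ℝ w₂ p := (h2.differentiable one_ne_zero) p
  have ha0 : a p ≠ 0 := (hapos p).ne'
  intro pd curl divaw S11 S12 S21 S22 d₁ d₂ nsq
  simp only [pd, curl, divaw, S11, S12, S21, S22, d₁, d₂, nsq, pow_two]
  simp (disch := fun_prop) only [fderiv_fun_mul, fderiv_fun_sub, fderiv_fun_add, fderiv_const_mul,
    ContinuousLinearMap.add_apply, ContinuousLinearMap.sub_apply,
    ContinuousLinearMap.smul_apply, smul_eq_mul, fderiv_const_apply, ContinuousLinearMap.zero_apply]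
  constructor <;> (field_simp; ring)
end

section
/- Existence of a smooth cut-off with square-root gradient bound: there exists a C^∞ function χ : ℝ² → [0,1] with χ = 1 on the unit ball B₁, χ = 0 outside B₂, and a constant C such that |∇χ| ≤ C χ^{1/2}(1-χ)^{1/2} pointwise on ℝ². -/
open Real

noncomputable section

namespace Stmt13Aux

/-- Derivative of `expNegInvGlue`. -/
def fd (t : ℝ) : ℝ := (t⁻¹) ^ 2 * expNegInvGlue t

lemma hasDerivAt_f (t : ℝ) : HasDerivAt expNegInvGlue (fd t) t := by
  have h := expNegInvGlue.hasDerivAt_polynomial_eval_inv_mul 1 t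
  simpa [fd] using h

lemma fd_nonneg (t : ℝ) : 0 ≤ fd t :=
  mul_nonneg (sq_nonneg _) (expNegInvGlue.nonneg t)

lemma fd_le (t : ℝ) : fd t ≤ 16 * Real.sqrt (expNegInvGlue t) := by
  rcases le_or_gt t 0 with h | h
  · rw [fd, expNegInvGlue.zero_of_nonpos h]
    simp [Real.sqrt_nonneg]
  · have hf : expNegInvGlue t = exp (-t⁻¹) := by
      simp [expNegInvGlue, not_le.2 h]
    rw [fd, hf, ← Real.exp_half]
    set u := t⁻¹ with hu
    have hu0 : 0 < u := inv_pos.2 h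
    have h4 : u / 4 ≤ exp (u / 4) := by linarith [Real.add_one_le_exp (u / 4)]
    have hsq : (u / 4) ^ 2 ≤ exp (u / 4) ^ 2 :=
      pow_le_pow_left₀ (by positivity) h4 2
    have hexp : exp (u / 4) ^ 2 = exp (u / 2) := by
      rw [sq, ← Real.exp_add]; ring_nf
    have key : u ^ 2 ≤ 16 * exp (u / 2) := by nlinarith [hsq, hexp]
    have h2 : exp (u / 2) * exp (-u) = exp (-u / 2) := by
      rw [← Real.exp_add]; ring_nf
    calc u ^ 2 * exp (-u) ≤ 16 * exp (u / 2) * exp (-u) := by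
          exact mul_le_mul_of_nonneg_right key (exp_pos _).le
      _ = 16 * exp (-u / 2) := by rw [mul_assoc, h2]

lemma f_ge {t : ℝ} (ht : 1 / 2 ≤ t) : exp (-2) ≤ expNegInvGlue t := by
  have ht0 : 0 < t := by linarith
  have hf : expNegInvGlue t = exp (-t⁻¹) := by
    simp [expNegInvGlue, not_le.2 ht0]
  rw [hf]
  apply Real.exp_le_exp.2
  have : t⁻¹ ≤ 2 := by
    rw [show (2 : ℝ) = (1/2 : ℝ)⁻¹ by norm_num]
    exact inv_anti₀ (by norm_num) ht
  linarith

lemma g_ge (x : ℝ) : exp (-2) ≤ expNegInvGlue x + expNegInvGlue (1 - x) := by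
  rcases le_or_gt x (1 / 2) with h | h
  · have := f_ge (show (1:ℝ)/2 ≤ 1 - x by linarith)
    linarith [expNegInvGlue.nonneg x]
  · have := f_ge h.le
    linarith [expNegInvGlue.nonneg (1 - x)]

lemma g_pos (x : ℝ) : 0 < expNegInvGlue x + expNegInvGlue (1 - x) :=
  lt_of_lt_of_le (exp_pos _) (g_ge x)

/-- Derivative of `Real.smoothTransition`. -/
def hd (x : ℝ) : ℝ :=
  (fd x * expNegInvGlue (1 - x) + expNegInvGlue x * fd (1 - x)) /
    (expNegInvGlue x + expNegInvGlue (1 - x)) ^ 2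

lemma hasDerivAt_h (x : ℝ) : HasDerivAt Real.smoothTransition (hd x) x := by
  have h1 := hasDerivAt_f x
  have h2 : HasDerivAt (fun y : ℝ => expNegInvGlue (1 - y)) (-fd (1 - x)) x := by
    have hid : HasDerivAt (fun y : ℝ => 1 - y) (-1) x := by
      simpa using (hasDerivAt_id x).const_sub 1
    have := (hasDerivAt_f (1 - x)).comp x hid
    simp only [mul_neg, mul_one] at this
    exact this
  have hg : HasDerivAt (fun y : ℝ => expNegInvGlue y + expNegInvGlue (1 - y))
      (fd x + -fd (1 - x)) x := h1.add h2
  have hdiv := h1.div hg (ne_of_gt (g_pos x))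
  have heq : Real.smoothTransition =
      fun y : ℝ => expNegInvGlue y / (expNegInvGlue y + expNegInvGlue (1 - y)) := rfl
  rw [heq]
  refine hdiv.congr_deriv ?_
  rw [hd]
  congr 1
  ring

lemma hd_nonneg (x : ℝ) : 0 ≤ hd x :=
  div_nonneg (add_nonneg (mul_nonneg (fd_nonneg _) (expNegInvGlue.nonneg _))
    (mul_nonneg (expNegInvGlue.nonneg _) (fd_nonneg _))) (sq_nonneg _)

set_option maxHeartbeats 1000000 in
lemma key {a b da db : ℝ} (ha : 0 ≤ a) (hb : 0 ≤ b) (hda : 0 ≤ da) (hdb : 0 ≤ db)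
    (h1 : da ≤ 16 * Real.sqrt a) (h2 : db ≤ 16 * Real.sqrt b) (hg : 1 / 9 ≤ a + b) :
    (da * b + a * db) / (a + b) ^ 2 ≤
      100 * Real.sqrt (a / (a + b)) * Real.sqrt (b / (a + b)) := by
  have hab : 0 < a + b := lt_of_lt_of_le (by norm_num) hg
  rw [Real.sqrt_div ha, Real.sqrt_div hb]
  set sa := Real.sqrt a with hsa
  set sb := Real.sqrt b with hsb
  have hsa0 : 0 ≤ sa := Real.sqrt_nonneg a
  have hsb0 : 0 ≤ sb := Real.sqrt_nonneg b
  have hsa2 : sa ^ 2 = a := Real.sq_sqrt ha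
  have hsb2 : sb ^ 2 = b := Real.sq_sqrt hb
  have hsgpos : 0 < Real.sqrt (a + b) := Real.sqrt_pos.2 hab
  have hsg2 : Real.sqrt (a + b) ^ 2 = a + b := Real.sq_sqrt hab.le
  have hq : 100 * (sa / Real.sqrt (a + b)) * (sb / Real.sqrt (a + b)) =
      100 * sa * sb * (a + b) / (a + b) ^ 2 := by
    rw [← hsg2]; field_simp; simp only [hsg2]
  rw [hq, div_le_div_iff_of_pos_right (by positivity : (0:ℝ) < (a + b) ^ 2)]
  -- goal : da * b + a * db ≤ 100 * sa * sb * (a + b)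
  have hg' : (1 : ℝ) / 9 ≤ sa ^ 2 + sb ^ 2 := by rw [hsa2, hsb2]; exact hg
  have h2q : (sa + sb) ^ 2 ≤ 2 * (sa ^ 2 + sb ^ 2) := by nlinarith [sq_nonneg (sa - sb)]
  have hq2 : (sa ^ 2 + sb ^ 2) / 9 ≤ (sa ^ 2 + sb ^ 2) ^ 2 := by nlinarith [hg', sq_nonneg sa, sq_nonneg sb]
  have hs : sa + sb ≤ 25 / 4 * (sa ^ 2 + sb ^ 2) := by
    by_contra hcon
    push_neg at hcon
    set q := sa ^ 2 + sb ^ 2 with hqdef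
    have hqpos : 0 < q := lt_of_lt_of_le (by norm_num) hg'
    have hspos : 0 < sa + sb := lt_trans (by positivity) hcon
    have t1 : 25 / 4 * q * q < (sa + sb) * q := mul_lt_mul_of_pos_right hcon hqpos
    have t2 : (sa + sb) * (25 / 4 * q) < (sa + sb) * (sa + sb) :=
      mul_lt_mul_of_pos_left hcon hspos
    nlinarith [t1, t2, h2q, hq2]
  have step1 : da * b + a * db ≤ 16 * sa * b + a * (16 * sb) := by
    have := mul_le_mul_of_nonneg_right h1 hb
    have := mul_le_mul_of_nonneg_left h2 ha
    linarith
  have step2 : 16 * sa * b + a * (16 * sb) ≤ 100 * sa * sb * (a + b) := by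
    rw [← hsa2, ← hsb2]
    have hmul := mul_le_mul_of_nonneg_left hs (by positivity : (0:ℝ) ≤ 16 * (sa * sb))
    calc 16 * sa * sb ^ 2 + sa ^ 2 * (16 * sb) = 16 * (sa * sb) * (sa + sb) := by ring
      _ ≤ 16 * (sa * sb) * (25 / 4 * (sa ^ 2 + sb ^ 2)) := hmul
      _ = 100 * sa * sb * (sa ^ 2 + sb ^ 2) := by ring
  linarith

lemma hd_le (x : ℝ) : hd x ≤ 100 * Real.sqrt (Real.smoothTransition x) *
    Real.sqrt (1 - Real.smoothTransition x) := by
  have ha0 : 0 ≤ expNegInvGlue x := expNegInvGlue.nonneg x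
  have hb0 : 0 ≤ expNegInvGlue (1 - x) := expNegInvGlue.nonneg (1 - x)
  have hg : 0 < expNegInvGlue x + expNegInvGlue (1 - x) := g_pos x
  have hst : Real.smoothTransition x =
      expNegInvGlue x / (expNegInvGlue x + expNegInvGlue (1 - x)) := rfl
  have h1st : 1 - Real.smoothTransition x =
      expNegInvGlue (1 - x) / (expNegInvGlue x + expNegInvGlue (1 - x)) := by
    rw [hst]; field_simp; ring
  rw [h1st, hst, hd]
  have hg9 : (1 : ℝ) / 9 ≤ expNegInvGlue x + expNegInvGlue (1 - x) := by
    refine le_trans ?_ (g_ge x)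
    have h9 : Real.exp 2 ≤ 9 := by
      have h1 : Real.exp 1 ≤ 3 := by linarith [Real.exp_one_lt_d9]
      have h1p : 0 < Real.exp 1 := Real.exp_pos 1
      calc Real.exp 2 = Real.exp 1 * Real.exp 1 := by rw [← Real.exp_add]; norm_num
        _ ≤ 3 * 3 := by nlinarith
        _ = 9 := by norm_num
    rw [Real.exp_neg, one_div]
    exact inv_anti₀ (Real.exp_pos 2) h9
  exact key ha0 hb0 (fd_nonneg x) (fd_nonneg (1 - x)) (fd_le x) (fd_le (1 - x)) hg9

end Stmt13Aux

open Stmt13Aux in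
/-- Existence of a smooth cut-off `χ : ℝ² → [0,1]` with `χ = 1` on `B₁`, `χ = 0`
outside `B₂`, and `|∇χ| ≤ C χ^{1/2} (1 - χ)^{1/2}` pointwise. -/
theorem stmt13 : ∃ χ : EuclideanSpace ℝ (Fin 2) → ℝ,
    ContDiff ℝ (⊤ : ℕ∞) χ ∧
    (∀ x, χ x ∈ Set.Icc (0 : ℝ) 1) ∧
    (∀ x ∈ Metric.ball (0 : EuclideanSpace ℝ (Fin 2)) 1, χ x = 1) ∧
    (∀ x, x ∉ Metric.ball (0 : EuclideanSpace ℝ (Fin 2)) 2 → χ x = 0) ∧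
    ∃ C : ℝ, ∀ x, ‖fderiv ℝ χ x‖ ≤ C * Real.sqrt (χ x) * Real.sqrt (1 - χ x) := by
  set χ : EuclideanSpace ℝ (Fin 2) → ℝ := fun x => Real.smoothTransition (2 - ‖x‖) with hχ
  have hone : ∀ x : EuclideanSpace ℝ (Fin 2), ‖x‖ < 1 → χ x = 1 := fun x hx =>
    Real.smoothTransition.one_of_one_le (by linarith)
  refine ⟨χ, ?_, ?_, ?_, ?_, 100, ?_⟩
  · rw [contDiff_iff_contDiffAt]
    intro x
    rcases eq_or_ne x 0 with rfl | hx
    · apply ContDiffAt.congr_of_eventuallyEq (contDiffAt_const (c := 1))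
      filter_upwards [Metric.ball_mem_nhds (0 : EuclideanSpace ℝ (Fin 2)) one_pos] with y hy
      exact hone y (by simpa using hy)
    · exact Real.smoothTransition.contDiffAt.comp x (contDiffAt_const.sub (contDiffAt_norm ℝ hx))
  · intro x
    exact ⟨Real.smoothTransition.nonneg _, Real.smoothTransition.le_one _⟩
  · intro x hx
    exact hone x (by simpa using hx)
  · intro x hx
    apply Real.smoothTransition.zero_of_nonpos
    have h2 : (2 : ℝ) ≤ ‖x‖ := by
      simpa [Metric.mem_ball, not_lt, dist_zero_right] using hx
    linarith
  · intro x
    rcases eq_or_ne x 0 with rfl | hx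
    · have hev : χ =ᶠ[nhds (0 : EuclideanSpace ℝ (Fin 2))] fun _ => (1 : ℝ) := by
        filter_upwards [Metric.ball_mem_nhds (0 : EuclideanSpace ℝ (Fin 2)) one_pos] with y hy
        exact hone y (by simpa using hy)
      rw [hev.fderiv_eq, fderiv_fun_const]
      have hχ0 : χ 0 = 1 := hone 0 (by simp)
      simp [hχ0]
    · have hnd : DifferentiableAt ℝ (fun y : EuclideanSpace ℝ (Fin 2) => ‖y‖) x :=
        (contDiffAt_norm ℝ hx : ContDiffAt ℝ 1 _ x).differentiableAt one_ne_zero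
      have hN := hnd.hasFDerivAt
      set N := fderiv ℝ (fun y : EuclideanSpace ℝ (Fin 2) => ‖y‖) x with hNdef
      have hNle : ‖N‖ ≤ 1 := by
        have := hN.le_of_lipschitz lipschitzWith_one_norm
        simpa using this
      have hφ : HasFDerivAt (fun y : EuclideanSpace ℝ (Fin 2) => 2 - ‖y‖) (-N) x := by
        have := (hasFDerivAt_const (2 : ℝ) x).sub hN
        simp only [zero_sub] at this
        exact this
      have hcomp : HasFDerivAt χ (hd (2 - ‖x‖) • (-N)) x := by
        have := (hasDerivAt_h (2 - ‖x‖)).comp_hasFDerivAt x hφ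
        rw [hχ]; exact this
      rw [hcomp.fderiv, norm_smul]
      have h1 : ‖hd (2 - ‖x‖)‖ = hd (2 - ‖x‖) := Real.norm_of_nonneg (hd_nonneg _)
      have h2 : ‖-N‖ ≤ 1 := by rwa [norm_neg]
      calc ‖hd (2 - ‖x‖)‖ * ‖-N‖ ≤ hd (2 - ‖x‖) * 1 := by
            rw [h1]; exact mul_le_mul_of_nonneg_left h2 (hd_nonneg _)
        _ = hd (2 - ‖x‖) := mul_one _
        _ ≤ 100 * Real.sqrt (χ x) * Real.sqrt (1 - χ x) := hd_le _
end
end
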